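/- Let V > 0, η > 0, and c_l, c_r ≥ 0 be such that d := √(V/η) < 1 and max(c_l,c_r) ≤ 10⁻¹⁰·d²·η. Then for every interval J of length V and every interval I = [u,v] of length d, there exists an increasing C² homeomorphism φ : I → J with φ'(u) = c_l, φ'(v) = c_r, φ''(u) = φ''(v) = 0, 0 < φ'(x) ≤ 19·√(ηV) for x in the interior of I, and |φ''(x)| ≤ 19·η for all x ∈ I. -/

import Mathlib

noncomputable def auxF (cl cr K t : ℝ) : ℝ :=
  cl*((t - t^3) + t^4/2) + (cr*(t^3 - t^4/2) + K*((t^3/3 - t^4/2) + t^5/5))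

noncomputable def auxf (cl cr K t : ℝ) : ℝ :=
  cl*(1 - 3*t^2 + 2*t^3) + cr*(3*t^2 - 2*t^3) + K*(t^2 - 2*t^3 + t^4)

noncomputable def auxg (cl cr K t : ℝ) : ℝ :=
  cl*(-6*t + 6*t^2) + cr*(6*t - 6*t^2) + K*(2*t - 6*t^2 + 4*t^3)

lemma auxF_deriv (cl cr K t : ℝ) : HasDerivAt (auxF cl cr K) (auxf cl cr K t) t := by
  have h1 := hasDerivAt_id t
  have h3 := hasDerivAt_pow 3 t
  have h4 := hasDerivAt_pow 4 t
  have h5 := hasDerivAt_pow 5 t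
  have := (((h1.sub h3).add (h4.div_const 2)).const_mul cl).add
    (((h3.sub (h4.div_const 2)).const_mul cr).add
      ((((h3.div_const 3).sub (h4.div_const 2)).add (h5.div_const 5)).const_mul K))
  refine this.congr_deriv ?_
  unfold auxf; push_cast; ring

lemma auxf_deriv (cl cr K t : ℝ) : HasDerivAt (auxf cl cr K) (auxg cl cr K t) t := by
  have h2 := hasDerivAt_pow 2 t
  have h3 := hasDerivAt_pow 3 t
  have h4 := hasDerivAt_pow 4 t
  have := (((((hasDerivAt_const t (1:ℝ)).sub (h2.const_mul 3)).add (h3.const_mul 2)).const_mul cl).add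
    ((((h2.const_mul 3).sub (h3.const_mul 2))).const_mul cr)).add
      (((h2.sub (h3.const_mul 2)).add h4).const_mul K)
  refine this.congr_deriv ?_
  unfold auxg; push_cast; ring

lemma auxf_le (e cl cr t : ℝ) (he : 0 < e) (hcl : 0 ≤ cl) (hcr : 0 ≤ cr)
    (hcl2 : cl ≤ e) (hcr2 : cr ≤ e) (h0 : 0 ≤ t) (h1 : t ≤ 1) :
    auxf cl cr (30*e - 15*(cl+cr)) t ≤ 19*e := by
  unfold auxf
  have hK : (0:ℝ) ≤ 30*e - 15*(cl+cr) := by linarith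
  nlinarith [mul_nonneg hcl (mul_nonneg (sq_nonneg t) (by linarith : (0:ℝ) ≤ 3 - 2*t)),
    mul_nonneg hcr (mul_nonneg (sq_nonneg (1-t)) (by linarith : (0:ℝ) ≤ 1 + 2*t)),
    mul_nonneg hK (mul_nonneg (sq_nonneg (t - 1/2)) (by nlinarith : (0:ℝ) ≤ 1/4 + t*(1-t)))]

lemma auxg_bound (e cl cr t : ℝ) (he : 0 < e) (hcl : 0 ≤ cl) (hcr : 0 ≤ cr)
    (hcl2 : cl ≤ e) (hcr2 : cr ≤ e) (h0 : 0 ≤ t) (h1 : t ≤ 1) :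
    |auxg cl cr (30*e - 15*(cl+cr)) t| ≤ 19*e := by
  unfold auxg
  have hK : (0:ℝ) ≤ 30*e - 15*(cl+cr) := by linarith
  have ha : (0:ℝ) ≤ t * (1 - t) := mul_nonneg h0 (by linarith)
  rw [abs_le]
  constructor
  · nlinarith [mul_nonneg hK (mul_nonneg ha (by linarith : (0:ℝ) ≤ 1 - t)),
      mul_nonneg hK (sq_nonneg (t - 1/2)),
      mul_nonneg hcr (sq_nonneg (t - 1/2)),
      mul_nonneg hcl (sq_nonneg (t - 1/2)),
      mul_nonneg hcl ha, mul_nonneg hcr ha]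
  · nlinarith [mul_nonneg hK (mul_nonneg ha h0),
      mul_nonneg hK (sq_nonneg (t - 1/2)),
      mul_nonneg hcr (sq_nonneg (t - 1/2)),
      mul_nonneg hcl (sq_nonneg (t - 1/2)),
      mul_nonneg hcl ha, mul_nonneg hcr ha]

lemma auxf_pos (cl cr K t : ℝ) (hcl : 0 ≤ cl) (hcr : 0 ≤ cr) (hK : 0 < K)
    (h0 : 0 < t) (h1 : t < 1) : 0 < auxf cl cr K t := by
  unfold auxf
  nlinarith [mul_nonneg hcl (mul_nonneg (sq_nonneg (1-t)) (by linarith : (0:ℝ) ≤ 1 + 2*t)),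
    mul_nonneg hcr (mul_nonneg (sq_nonneg t) (by linarith : (0:ℝ) ≤ 3 - 2*t)),
    mul_pos hK (mul_pos (mul_pos h0 h0) (mul_pos (sub_pos.mpr h1) (sub_pos.mpr h1)))]

/-- Lemma: existence of an increasing `C²` homeomorphism `φ : I → J` with prescribed
boundary derivatives and bounds. -/
theorem stmt_13 (V η cl cr : ℝ) (hV : 0 < V) (hη : 0 < η)
    (d : ℝ) (hd : d = Real.sqrt (V / η)) (hd1 : d < 1)
    (hcl : 0 ≤ cl) (hcr : 0 ≤ cr)
    (hmax : max cl cr ≤ d ^ 2 * η / 10 ^ 10)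
    (p q u v : ℝ) (hJ : q - p = V) (hI : v - u = d) :
    ∃ φ φ' φ'' : ℝ → ℝ,
      StrictMonoOn φ (Set.Icc u v) ∧
      φ '' Set.Icc u v = Set.Icc p q ∧
      (∀ x ∈ Set.Icc u v, HasDerivWithinAt φ (φ' x) (Set.Icc u v) x) ∧
      (∀ x ∈ Set.Icc u v, HasDerivWithinAt φ' (φ'' x) (Set.Icc u v) x) ∧
      ContinuousOn φ'' (Set.Icc u v) ∧
      φ' u = cl ∧ φ' v = cr ∧ φ'' u = 0 ∧ φ'' v = 0 ∧
      (∀ x ∈ Set.Ioo u v, 0 < φ' x ∧ φ' x ≤ 19 * Real.sqrt (η * V)) ∧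
      (∀ x ∈ Set.Icc u v, |φ'' x| ≤ 19 * η) := by
  have hd0 : 0 < d := by
    rw [hd]; exact Real.sqrt_pos.mpr (div_pos hV hη)
  have hdne : d ≠ 0 := ne_of_gt hd0
  have hd2 : η * d ^ 2 = V := by
    rw [hd, Real.sq_sqrt (le_of_lt (div_pos hV hη))]
    field_simp
  have hcl' : cl ≤ d ^ 2 * η / 10 ^ 10 := le_trans (le_max_left _ _) hmax
  have hcr' : cr ≤ d ^ 2 * η / 10 ^ 10 := le_trans (le_max_right _ _) hmax
  have hcl2 : cl ≤ η * d := by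
    nlinarith [mul_nonneg (mul_pos hη hd0).le (by linarith : (0:ℝ) ≤ 1 - d),
      mul_nonneg (sq_nonneg d) hη.le]
  have hcr2 : cr ≤ η * d := by
    nlinarith [mul_nonneg (mul_pos hη hd0).le (by linarith : (0:ℝ) ≤ 1 - d),
      mul_nonneg (sq_nonneg d) hη.le]
  set K : ℝ := 30*(η*d) - 15*(cl+cr) with hK
  have hK0 : 0 < K := by nlinarith [mul_pos hη hd0, mul_pos (mul_pos hη hd0) (sub_pos.mpr hd1)]
  set s : ℝ → ℝ := fun x => (x - u) / d with hsdef
  have hsu : s u = 0 := by simp [hsdef]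
  have hsv : s v = 1 := by simp [hsdef, hI, div_self hdne]
  have huv : u < v := by nlinarith
  have hder1 : ∀ x : ℝ, HasDerivAt (fun y => p + d * auxF cl cr K (s y)) (auxf cl cr K (s x)) x := by
    intro x
    have hs : HasDerivAt s (1/d) x := ((hasDerivAt_id x).sub_const u).div_const d
    have h := ((auxF_deriv cl cr K (s x)).comp x hs).const_mul d |>.const_add p
    refine h.congr_deriv ?_
    field_simp
  have hder2 : ∀ x : ℝ, HasDerivAt (fun y => auxf cl cr K (s y)) (auxg cl cr K (s x) / d) x := by
    intro x
    have hs : HasDerivAt s (1/d) x := ((hasDerivAt_id x).sub_const u).div_const d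
    have h := (auxf_deriv cl cr K (s x)).comp x hs
    refine h.congr_deriv ?_
    field_simp
  have hFu : p + d * auxF cl cr K (s u) = p := by rw [hsu]; unfold auxF; ring
  have hFv : p + d * auxF cl cr K (s v) = q := by
    rw [hsv]; unfold auxF; rw [hK]; nlinarith
  have hsmem : ∀ x ∈ Set.Icc u v, 0 ≤ s x ∧ s x ≤ 1 := by
    intro x hx
    exact ⟨div_nonneg (by linarith [hx.1]) hd0.le, by rw [div_le_one hd0]; linarith [hx.2]⟩
  have hsmem' : ∀ x ∈ Set.Ioo u v, 0 < s x ∧ s x < 1 := by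
    intro x hx
    exact ⟨div_pos (by linarith [hx.1]) hd0, by rw [div_lt_one hd0]; linarith [hx.2]⟩
  have hcontφ : ContinuousOn (fun x => p + d * auxF cl cr K (s x)) (Set.Icc u v) :=
    fun x _ => (hder1 x).continuousAt.continuousWithinAt
  have hmono : StrictMonoOn (fun x => p + d * auxF cl cr K (s x)) (Set.Icc u v) := by
    apply strictMonoOn_of_deriv_pos (convex_Icc u v) hcontφ
    intro x hx
    rw [interior_Icc] at hx
    rw [(hder1 x).deriv]
    exact auxf_pos cl cr K _ hcl hcr hK0 (hsmem' x hx).1 (hsmem' x hx).2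
  refine ⟨fun x => p + d * auxF cl cr K (s x), fun x => auxf cl cr K (s x),
    fun x => auxg cl cr K (s x) / d, hmono, ?_, ?_, ?_, ?_, ?_, ?_, ?_, ?_, ?_, ?_⟩
  · apply Set.Subset.antisymm
    · rintro y ⟨x, hx, rfl⟩
      constructor
      · calc p = p + d * auxF cl cr K (s u) := hFu.symm
          _ ≤ _ := hmono.monotoneOn (Set.left_mem_Icc.mpr huv.le) hx hx.1
      · calc _ ≤ p + d * auxF cl cr K (s v) :=
            hmono.monotoneOn hx (Set.right_mem_Icc.mpr huv.le) hx.2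
          _ = q := hFv
    · have := intermediate_value_Icc huv.le hcontφ
      rw [hFu, hFv] at this
      exact this
  · exact fun x _ => (hder1 x).hasDerivWithinAt
  · exact fun x _ => (hder2 x).hasDerivWithinAt
  · apply ContinuousOn.div_const
    apply Continuous.continuousOn
    have hscont : Continuous s := by fun_prop
    unfold auxg
    fun_prop
  · show auxf cl cr K (s u) = cl
    rw [hsu]; unfold auxf; ring
  · show auxf cl cr K (s v) = cr
    rw [hsv]; unfold auxf; ring
  · show auxg cl cr K (s u) / d = 0
    rw [hsu]; unfold auxg; norm_num
  · show auxg cl cr K (s v) / d = 0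
    rw [hsv]; unfold auxg; norm_num
  · intro x hx
    obtain ⟨h0, h1⟩ := hsmem' x hx
    have hsqrt : Real.sqrt (η * V) = η * d := by
      rw [show η * V = (η*d)^2 by rw [← hd2]; ring, Real.sqrt_sq (mul_nonneg hη.le hd0.le)]
    refine ⟨auxf_pos cl cr K _ hcl hcr hK0 h0 h1, ?_⟩
    rw [hsqrt]
    have := auxf_le (η*d) cl cr (s x) (mul_pos hη hd0) hcl hcr hcl2 hcr2 h0.le h1.le
    rw [← hK] at this
    linarith
  · intro x hx
    obtain ⟨h0, h1⟩ := hsmem x hx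
    rw [abs_div, abs_of_pos hd0, div_le_iff₀ hd0]
    have := auxg_bound (η*d) cl cr (s x) (mul_pos hη hd0) hcl hcr hcl2 hcr2 h0 h1
    rw [← hK] at this
    linarith [this]
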